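/- Let q = 3, m ≥ 3, and n = (3^m − 1)/2. Let u ≥ 1 and v ≥ 1 be integers with u + v + 1 = m, and let δ be the integer whose ternary expansion has digit string (0, 2, …, 2, 1, …, 1) consisting of one 0, then u twos, then v ones, i.e., δ = 2·Σ_{i=v}^{m−2} 3^i + Σ_{i=0}^{v−1} 3^i. Then δ is a coset leader modulo n if and only if u ≤ v + 1 (equivalently, u ≤ m/2). -/

import Mathlib

/-- The `q`-cyclotomic coset of `s` modulo `n`. -/
def cosetOf (q n s : ℕ) : Set ℕ := {t | ∃ j : ℕ, t = s * q ^ j % n}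

/-- `s` is a coset leader: `s < n` and `s` is the smallest element of its coset. -/
def IsCosetLeader (q n s : ℕ) : Prop := s < n ∧ ∀ j : ℕ, s ≤ s * q ^ j % n

private lemma geom3 (k : ℕ) : 2 * ∑ i ∈ Finset.range k, 3 ^ i + 1 = 3 ^ k := by
  induction k with
  | zero => simp
  | succ k ih =>
    rw [Finset.sum_range_succ, pow_succ]
    omega

theorem stmt1 (m n : ℕ) (hm : 3 ≤ m) (hn : n = (3 ^ m - 1) / 2)
    (u v : ℕ) (hu : 1 ≤ u) (hv : 1 ≤ v) (huv : u + v + 1 = m)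
    (δ : ℕ)
    (hδ : δ = 2 * ∑ i ∈ Finset.Ico v (m - 1), 3 ^ i + ∑ i ∈ Finset.range v, 3 ^ i) :
    IsCosetLeader 3 n δ ↔ u ≤ v + 1 := by
  subst huv
  simp only [Nat.add_sub_cancel] at hδ
  -- basic facts
  have hoddm : 3 ^ (u + v + 1) % 2 = 1 := by simp [Nat.pow_mod]
  have hpow1 : 1 ≤ 3 ^ (u + v + 1) := Nat.one_le_pow _ _ (by norm_num)
  have h3m : 2 * n + 1 = 3 ^ (u + v + 1) := by omega
  have hbig : 27 ≤ 3 ^ (u + v + 1) := by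
    calc (27:ℕ) = 3 ^ 3 := by norm_num
    _ ≤ 3 ^ (u + v + 1) := Nat.pow_le_pow_right (by norm_num) (by omega)
  have hn0 : 0 < n := by omega
  -- geometric sums
  have hg1 := geom3 v
  have hg2 := geom3 (u + v)
  have hsplit : (∑ i ∈ Finset.range v, 3 ^ i) + ∑ i ∈ Finset.Ico v (u + v), 3 ^ i
      = ∑ i ∈ Finset.range (u + v), (3:ℕ) ^ i := by
    simpa using Finset.sum_range_add_sum_Ico (fun i => (3:ℕ) ^ i) (show v ≤ u + v by omega)
  have hpuv : (3:ℕ) ^ (u + v) = 3 ^ u * 3 ^ v := by rw [pow_add]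
  have h2δ : 2 * δ + 3 ^ v + 1 = 2 * (3 ^ u * 3 ^ v) := by omega
  -- the halves P and Q
  have hoddv : 3 ^ v % 2 = 1 := by simp [Nat.pow_mod]
  have hoddu : 3 ^ u % 2 = 1 := by simp [Nat.pow_mod]
  obtain ⟨P, hP⟩ : ∃ P, 3 * 3 ^ v + 1 = 2 * P := ⟨(3 * 3 ^ v + 1) / 2, by omega⟩
  obtain ⟨Q, hQ⟩ : ∃ Q, 3 ^ u + 1 = 2 * Q := ⟨(3 ^ u + 1) / 2, by omega⟩
  have hu1 : 1 ≤ 3 ^ u := Nat.one_le_pow _ _ (by norm_num)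
  have hv1 : 1 ≤ 3 ^ v := Nat.one_le_pow _ _ (by norm_num)
  have hP0 : 0 < P := by omega
  have hQ0 : 0 < Q := by omega
  -- δ + 3^v * Q = n
  have E2 : 2 * (3 ^ v * Q) = 3 ^ u * 3 ^ v + 3 ^ v := by
    calc 2 * (3 ^ v * Q) = 3 ^ v * (2 * Q) := by ring
    _ = 3 ^ v * (3 ^ u + 1) := by rw [← hQ]
    _ = 3 ^ u * 3 ^ v + 3 ^ v := by ring
  have h3AB : (3:ℕ) ^ (u + v + 1) = 3 * (3 ^ u * 3 ^ v) := by rw [pow_succ, pow_add]; ring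
  have hδn : δ + 3 ^ v * Q = n := by omega
  have hδlt : δ < n := by
    have : 0 < 3 ^ v * Q := Nat.mul_pos (by omega) hQ0
    omega
  -- key identity 1
  have key1 : ∀ s : ℕ, δ * 3 ^ (s + 1) + 3 ^ s * P = 2 * 3 ^ s * n := by
    intro s
    have cast1 : ((δ * 3 ^ (s + 1) + 3 ^ s * P : ℕ) : ℚ) = ((2 * 3 ^ s * n : ℕ) : ℚ) := by
      have c1 : (2:ℚ) * δ + 3 ^ v + 1 = 2 * (3 ^ u * 3 ^ v) := by exact_mod_cast h2δ
      have c2 : (3:ℚ) * 3 ^ v + 1 = 2 * P := by exact_mod_cast hP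
      have c3 : (2:ℚ) * n + 1 = 3 ^ (u + v + 1) := by exact_mod_cast h3m
      push_cast
      linear_combination (3 * (3:ℚ) ^ s / 2) * c1 - ((3:ℚ) ^ s / 2) * c2 - (3:ℚ) ^ s * c3
    exact_mod_cast cast1
  -- key identity 2
  have key2 : ∀ k : ℕ, δ * 3 ^ (u + 1 + k) + 3 ^ k * Q + 3 ^ k * n = 2 * (3 ^ k * 3 ^ u) * n := by
    intro k
    have cast2 : ((δ * 3 ^ (u + 1 + k) + 3 ^ k * Q + 3 ^ k * n : ℕ) : ℚ)
        = ((2 * (3 ^ k * 3 ^ u) * n : ℕ) : ℚ) := by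
      have c1 : (2:ℚ) * δ + 3 ^ v + 1 = 2 * (3 ^ u * 3 ^ v) := by exact_mod_cast h2δ
      have c2 : (3:ℚ) ^ u + 1 = 2 * Q := by exact_mod_cast hQ
      have c3 : (2:ℚ) * n + 1 = 3 ^ (u + v + 1) := by exact_mod_cast h3m
      push_cast
      linear_combination (3 * (3:ℚ) ^ u * 3 ^ k / 2) * c1 - ((3:ℚ) ^ k / 2) * c2
        + ((3:ℚ) ^ k * (1 - 2 * 3 ^ u) / 2) * c3
    exact_mod_cast cast2
  -- general mod computation lemma
  have hmodlem : ∀ x c K : ℕ, 0 < c → c ≤ n → x + c = K * n → x % n = n - c := by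
    intro x c K hc hcn hx
    rcases K with _ | K
    · simp only [Nat.zero_mul] at hx; omega
    · have hx' : x + c = K * n + n := by rw [hx]; ring
      have h1 : x = n * K + (n - c) := by
        have : K * n = n * K := Nat.mul_comm _ _
        omega
      rw [h1, Nat.mul_add_mod]
      exact Nat.mod_eq_of_lt (by omega)
  -- mod formula, family 1
  have hf1 : ∀ s : ℕ, s + 1 ≤ u → δ * 3 ^ (s + 1) % n = n - 3 ^ s * P := by
    intro s hs
    apply hmodlem _ _ (2 * 3 ^ s) _ _ (key1 s)
    · exact Nat.mul_pos (pow_pos (by norm_num) s) hP0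
    · -- 3^s * P ≤ n
      have E1 : 2 * (3 ^ s * P) = 3 ^ (s + 1) * 3 ^ v + 3 ^ s := by
        calc 2 * (3 ^ s * P) = 3 ^ s * (2 * P) := by ring
        _ = 3 ^ s * (3 * 3 ^ v + 1) := by rw [← hP]
        _ = 3 ^ (s + 1) * 3 ^ v + 3 ^ s := by rw [pow_succ]; ring
      have l1 : (3:ℕ) ^ (s + 1) * 3 ^ v ≤ 3 ^ u * 3 ^ v :=
        Nat.mul_le_mul (Nat.pow_le_pow_right (by norm_num) hs) le_rfl
      have l2 : (3:ℕ) ^ s ≤ 3 ^ u := Nat.pow_le_pow_right (by norm_num) (by omega)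
      have l3 : (3:ℕ) ^ u ≤ 3 ^ u * 3 ^ v := Nat.le_mul_of_pos_right _ (by omega)
      omega
  -- mod formula, family 2
  have hf2 : ∀ k : ℕ, k < v → δ * 3 ^ (u + 1 + k) % n = n - 3 ^ k * Q := by
    intro k hk
    have hk1 : (3:ℕ) ^ k ≤ 2 * (3 ^ k * 3 ^ u) := by
      have : (3:ℕ) ^ k ≤ 3 ^ k * 3 ^ u := Nat.le_mul_of_pos_right _ (by omega)
      omega
    have hKey : δ * 3 ^ (u + 1 + k) + 3 ^ k * Q = (2 * (3 ^ k * 3 ^ u) - 3 ^ k) * n := by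
      have h2 := key2 k
      have h3 : (2 * (3 ^ k * 3 ^ u) - 3 ^ k) * n = 2 * (3 ^ k * 3 ^ u) * n - 3 ^ k * n :=
        Nat.sub_mul _ _ _
      have h4 : 3 ^ k * n ≤ 2 * (3 ^ k * 3 ^ u) * n := Nat.mul_le_mul hk1 le_rfl
      omega
    apply hmodlem _ _ _ _ _ hKey
    · exact Nat.mul_pos (pow_pos (by norm_num) k) hQ0
    · have l1 : (3:ℕ) ^ k * Q ≤ 3 ^ v * Q :=
        Nat.mul_le_mul (Nat.pow_le_pow_right (by norm_num) (le_of_lt hk)) le_rfl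
      omega
  constructor
  · -- leader → u ≤ v + 1
    intro ⟨_, hall⟩
    by_contra hcon
    push_neg at hcon
    obtain ⟨u', rfl⟩ : ∃ u', u = u' + 1 := ⟨u - 1, by omega⟩
    have hall' := hall (u' + 1)
    rw [hf1 u' le_rfl] at hall'
    -- derive contradiction: 3^u' * P > 3^v * Q
    have E1 : 2 * (3 ^ u' * P) = 3 ^ (u' + 1) * 3 ^ v + 3 ^ u' := by
      calc 2 * (3 ^ u' * P) = 3 ^ u' * (2 * P) := by ring
      _ = 3 ^ u' * (3 * 3 ^ v + 1) := by rw [← hP]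
      _ = 3 ^ (u' + 1) * 3 ^ v + 3 ^ u' := by rw [pow_succ]; ring
    have E3 : (3:ℕ) ^ v < 3 ^ u' := Nat.pow_lt_pow_right (by norm_num) (by omega)
    omega
  · -- u ≤ v + 1 → leader
    intro h
    refine ⟨hδlt, fun j => ?_⟩
    -- periodicity: reduce to r = j % (u+v+1)
    have hmeq : (3:ℕ) ^ (u + v + 1) ≡ 1 [MOD n] := by
      rw [Nat.ModEq.comm, Nat.modEq_iff_dvd' (by omega)]
      exact ⟨2, by omega⟩
    have hper : δ * 3 ^ j % n = δ * 3 ^ (j % (u + v + 1)) % n := by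
      conv_lhs => rw [show j = (u + v + 1) * (j / (u + v + 1)) + j % (u + v + 1) from
        (Nat.div_add_mod j _).symm]
      rw [pow_add, pow_mul]
      have h2 : ((3:ℕ) ^ (u + v + 1)) ^ (j / (u + v + 1)) ≡ 1 [MOD n] := by
        simpa using hmeq.pow (j / (u + v + 1))
      have h3 : δ * ((3 ^ (u + v + 1)) ^ (j / (u + v + 1)) * 3 ^ (j % (u + v + 1)))
          ≡ δ * (1 * 3 ^ (j % (u + v + 1))) [MOD n] :=
        (Nat.ModEq.refl δ).mul (h2.mul (Nat.ModEq.refl _))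
      simpa [one_mul, Nat.ModEq] using h3
    rw [hper]
    have hrlt : j % (u + v + 1) < u + v + 1 := Nat.mod_lt _ (by omega)
    set r := j % (u + v + 1) with hr
    rcases Nat.eq_zero_or_pos r with h0 | hpos
    · rw [h0]
      simpa [Nat.mod_eq_of_lt hδlt] using le_refl δ
    · by_cases hru : r ≤ u
      · obtain ⟨s, hseq⟩ : ∃ s, r = s + 1 := ⟨r - 1, by omega⟩
        rw [hseq, hf1 s (by omega)]
        have E1 : 2 * (3 ^ s * P) = 3 ^ (s + 1) * 3 ^ v + 3 ^ s := by
          calc 2 * (3 ^ s * P) = 3 ^ s * (2 * P) := by ring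
          _ = 3 ^ s * (3 * 3 ^ v + 1) := by rw [← hP]
          _ = 3 ^ (s + 1) * 3 ^ v + 3 ^ s := by rw [pow_succ]; ring
        have l1 : (3:ℕ) ^ (s + 1) * 3 ^ v ≤ 3 ^ u * 3 ^ v :=
          Nat.mul_le_mul (Nat.pow_le_pow_right (by norm_num) (by omega)) le_rfl
        have l2 : (3:ℕ) ^ s ≤ 3 ^ v := Nat.pow_le_pow_right (by norm_num) (by omega)
        omega
      · obtain ⟨k, hkeq⟩ : ∃ k, r = u + 1 + k := ⟨r - u - 1, by omega⟩
        have hkv : k < v := by omega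
        rw [hkeq, hf2 k hkv]
        have l1 : (3:ℕ) ^ k * Q ≤ 3 ^ v * Q :=
          Nat.mul_le_mul (Nat.pow_le_pow_right (by norm_num) (le_of_lt hkv)) le_rfl
        omega
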